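/- Let d, n be positive integers and let Ω₁, …, Ωₙ be nonempty compact convex subsets of ℝ^d. Let X be the convex hull of ⋃ᵢ Ωᵢ, V = Ω₁ × ⋯ × Ωₙ, and Y = { ((y₁,s₁),…,(yₙ,sₙ)) ∈ (ℝ^d × ℝ)^n : ‖yᵢ‖ ≤ sᵢ for all i, and ∑ᵢ sᵢ = 1 }. Define f(x, v, y) = ∑ᵢ ⟨x − vᵢ, yᵢ⟩. Then the minimax value min over (x,v) ∈ X × V of max over y ∈ Y of f(x,v,y) equals r* := inf over x ∈ ℝ^d of max over i of dist(x, Ωᵢ) (the smallest intersecting ball radius). -/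

import Mathlib

open Metric Set Finset

section Aux

variable {E : Type*} [NormedAddCommGroup E] [InnerProductSpace ℝ E]

lemma sib_aux_sup {n : ℕ} (hn : 0 < n) (x : E) (v : Fin n → E) :
    (⨆ y : {y : Fin n → E × ℝ //
        (∀ i, ‖(y i).1‖ ≤ (y i).2) ∧ (∑ i, (y i).2) = 1},
      ∑ i, (inner ℝ (x - v i) ((y.1 i).1) : ℝ)) = ⨆ i, ‖x - v i‖ := by
  haveI : Nonempty (Fin n) := ⟨⟨0, hn⟩⟩
  have hM : ∀ i, ‖x - v i‖ ≤ ⨆ j, ‖x - v j‖ :=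
    fun i => le_ciSup (f := fun j => ‖x - v j‖)
      (Set.Finite.bddAbove (Set.finite_range _)) i
  have hM0 : (0 : ℝ) ≤ ⨆ j, ‖x - v j‖ :=
    le_trans (norm_nonneg _) (hM (Classical.arbitrary _))
  have hub : ∀ y : {y : Fin n → E × ℝ //
      (∀ i, ‖(y i).1‖ ≤ (y i).2) ∧ (∑ i, (y i).2) = 1},
      (∑ i, (inner ℝ (x - v i) ((y.1 i).1) : ℝ)) ≤ ⨆ j, ‖x - v j‖ := by
    rintro ⟨y, hy1, hy2⟩
    calc ∑ i, (inner ℝ (x - v i) ((y i).1) : ℝ)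
        ≤ ∑ i, (⨆ j, ‖x - v j‖) * (y i).2 := by
          refine Finset.sum_le_sum fun i _ => ?_
          calc (inner ℝ (x - v i) ((y i).1) : ℝ) ≤ ‖x - v i‖ * ‖(y i).1‖ :=
                real_inner_le_norm _ _
            _ ≤ (⨆ j, ‖x - v j‖) * (y i).2 :=
                mul_le_mul (hM i) (hy1 i) (norm_nonneg _) hM0
      _ = ⨆ j, ‖x - v j‖ := by rw [← Finset.mul_sum, hy2, mul_one]
  have key : ∀ i : Fin n, ∃ y : {y : Fin n → E × ℝ //
      (∀ i, ‖(y i).1‖ ≤ (y i).2) ∧ (∑ i, (y i).2) = 1},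
      (∑ j, (inner ℝ (x - v j) ((y.1 j).1) : ℝ)) = ‖x - v i‖ := by
    intro i
    classical
    set w : E := ‖x - v i‖⁻¹ • (x - v i) with hw
    refine ⟨⟨fun j => (if j = i then w else 0, if j = i then (1:ℝ) else 0), ?_, ?_⟩, ?_⟩
    · intro j
      dsimp only
      by_cases h : j = i
      · rw [if_pos h, if_pos h]
        rcases eq_or_ne (x - v i) 0 with h0 | h0
        · simp [hw, h0]
        · rw [hw, norm_smul, norm_inv, norm_norm,
            inv_mul_cancel₀ (norm_ne_zero_iff.2 h0)]
      · rw [if_neg h, if_neg h]; simp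
    · simp
    · have : ∀ j : Fin n,
          (inner ℝ (x - v j) ((if j = i then w else 0 : E)) : ℝ)
          = if j = i then (inner ℝ (x - v i) w : ℝ) else 0 := by
        intro j
        by_cases h : j = i <;> simp [h]
      calc (∑ j, (inner ℝ (x - v j)
            ((fun j => ((if j = i then w else 0 : E), if j = i then (1:ℝ) else 0)) j).1 : ℝ))
          = ∑ j, if j = i then (inner ℝ (x - v i) w : ℝ) else 0 :=
            Finset.sum_congr rfl fun j _ => this j
        _ = (inner ℝ (x - v i) w : ℝ) := by simp
        _ = ‖x - v i‖ := by
            rcases eq_or_ne (x - v i) 0 with h0 | h0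
            · simp [hw, h0]
            · rw [hw, real_inner_smul_right, real_inner_self_eq_norm_mul_norm,
                inv_mul_cancel_left₀ (norm_ne_zero_iff.2 h0)]
  haveI : Nonempty {y : Fin n → E × ℝ //
      (∀ i, ‖(y i).1‖ ≤ (y i).2) ∧ (∑ i, (y i).2) = 1} :=
    ⟨(key ⟨0, hn⟩).choose⟩
  refine le_antisymm (ciSup_le hub) (ciSup_le fun i => ?_)
  obtain ⟨y, hy⟩ := key i
  rw [← hy]
  exact le_ciSup ⟨_, Set.forall_mem_range.2 hub⟩ y

lemma sib_hull_eq {n : ℕ} (hn : 0 < n) (Ω : Fin n → Set E)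
    (hne : ∀ i, (Ω i).Nonempty) (hconv : ∀ i, Convex ℝ (Ω i)) :
    convexHull ℝ (⋃ i, Ω i) =
      (fun tv : (Fin n → ℝ) × (Fin n → E) => ∑ i, tv.1 i • tv.2 i) ''
        (stdSimplex ℝ (Fin n) ×ˢ Set.pi Set.univ Ω) := by
  classical
  apply Set.Subset.antisymm
  · apply convexHull_min
    · rintro z hz
      rw [Set.mem_iUnion] at hz
      obtain ⟨j, hj⟩ := hz
      refine ⟨(fun i => if i = j then 1 else 0,
        Function.update (fun i => (hne i).choose) j z), ⟨⟨?_, ?_⟩, ?_⟩, ?_⟩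
      · intro i; by_cases h : i = j <;> simp [h]
      · simp
      · intro i _
        by_cases h : i = j
        · subst h; simpa using hj
        · simpa [Function.update_of_ne h] using (hne i).choose_spec
      · show (∑ i, (if i = j then (1:ℝ) else 0) •
            Function.update (fun i => (hne i).choose) j z i) = z
        rw [Finset.sum_eq_single_of_mem j (Finset.mem_univ j)]
        · simp
        · intro k _ hk; simp [hk]
    · rintro _ ⟨⟨t, v⟩, ⟨ht, hv⟩, rfl⟩ _ ⟨⟨t', v'⟩, ⟨ht', hv'⟩, rfl⟩ a b ha hb hab
      set s : Fin n → ℝ := fun i => a * t i + b * t' i with hs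
      have hs0 : ∀ i, 0 ≤ s i := fun i =>
        add_nonneg (mul_nonneg ha (ht.1 i)) (mul_nonneg hb (ht'.1 i))
      set w : Fin n → E := fun i =>
        if h : s i = 0 then (hne i).choose
        else (s i)⁻¹ • ((a * t i) • v i + (b * t' i) • v' i) with hwdef
      have hzero : ∀ i, s i = 0 → a * t i = 0 ∧ b * t' i = 0 := by
        intro i h
        have h' : a * t i + b * t' i = 0 := h
        constructor <;>
          nlinarith [mul_nonneg ha (ht.1 i), mul_nonneg hb (ht'.1 i)]
      refine ⟨(s, w), ⟨⟨hs0, ?_⟩, ?_⟩, ?_⟩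
      · simp only [hs]
        rw [Finset.sum_add_distrib, ← Finset.mul_sum, ← Finset.mul_sum, ht.2, ht'.2]
        simpa using hab
      · intro i _
        simp only [hwdef]
        split_ifs with h
        · exact (hne i).choose_spec
        · have hsi : 0 < s i := lt_of_le_of_ne (hs0 i) (Ne.symm h)
          have : (s i)⁻¹ • ((a * t i) • v i + (b * t' i) • v' i)
              = (a * t i / s i) • v i + (b * t' i / s i) • v' i := by
            rw [smul_add, smul_smul, smul_smul]
            ring_nf
          rw [this]
          refine hconv i (hv i (Set.mem_univ i)) (hv' i (Set.mem_univ i))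
            (div_nonneg (mul_nonneg ha (ht.1 i)) hsi.le)
            (div_nonneg (mul_nonneg hb (ht'.1 i)) hsi.le) ?_
          field_simp
          rfl
      · show ∑ i, s i • w i = a • ∑ i, t i • v i + b • ∑ i, t' i • v' i
        rw [Finset.smul_sum, Finset.smul_sum, ← Finset.sum_add_distrib]
        refine Finset.sum_congr rfl fun i _ => ?_
        simp only [hwdef]
        split_ifs with h
        · obtain ⟨h1, h2⟩ := hzero i h
          rw [h, zero_smul, smul_smul, smul_smul, h1, h2, zero_smul, zero_smul, add_zero]
        · rw [smul_inv_smul₀ h, smul_smul, smul_smul]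
  · rintro _ ⟨⟨t, v⟩, ⟨ht, hv⟩, rfl⟩
    exact (convex_convexHull ℝ _).sum_mem (fun i _ => ht.1 i) ht.2
      fun i _ => subset_convexHull ℝ _ (Set.mem_iUnion.2 ⟨i, hv i (Set.mem_univ i)⟩)

end Aux

/-- **SIB as a zero-sum game (value).** The minimax value of the SIB game,
`min_{(x,v) ∈ X × V} max_{y ∈ Y} ∑ i ⟪x - vᵢ, yᵢ⟫`, equals the smallest
intersecting ball radius `r* = inf_x max_i dist(x, Ωᵢ)`. -/
theorem sib_game_value (d n : ℕ) (hd : 0 < d) (hn : 0 < n)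
    (Ω : Fin n → Set (EuclideanSpace ℝ (Fin d)))
    (hne : ∀ i, (Ω i).Nonempty) (hcpt : ∀ i, IsCompact (Ω i))
    (hconv : ∀ i, Convex ℝ (Ω i)) :
    (⨅ p : {p : (EuclideanSpace ℝ (Fin d)) × (Fin n → EuclideanSpace ℝ (Fin d)) //
        p.1 ∈ convexHull ℝ (⋃ i, Ω i) ∧ ∀ i, p.2 i ∈ Ω i},
      ⨆ y : {y : Fin n → (EuclideanSpace ℝ (Fin d)) × ℝ //
        (∀ i, ‖(y i).1‖ ≤ (y i).2) ∧ (∑ i, (y i).2) = 1},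
        ∑ i, (inner ℝ (p.1.1 - p.1.2 i) ((y.1 i).1) : ℝ)) =
    ⨅ x : EuclideanSpace ℝ (Fin d), ⨆ i, Metric.infDist x (Ω i) := by
  classical
  haveI : Nonempty (Fin n) := ⟨⟨0, hn⟩⟩
  set K := convexHull ℝ (⋃ i, Ω i) with hK
  have hKconv : Convex ℝ K := convex_convexHull ℝ _
  have hKcpt : IsCompact K := by
    rw [hK, sib_hull_eq hn Ω hne hconv]
    exact ((isCompact_stdSimplex _ _).prod (isCompact_univ_pi hcpt)).image (by fun_prop)
  have hv0 : ∀ i, (hne i).choose ∈ Ω i := fun i => (hne i).choose_spec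
  have hsub : ∀ i, Ω i ⊆ K := fun i =>
    (Set.subset_iUnion Ω i).trans (subset_convexHull ℝ _)
  haveI hPne : Nonempty {p : (EuclideanSpace ℝ (Fin d)) × (Fin n → EuclideanSpace ℝ (Fin d)) //
      p.1 ∈ convexHull ℝ (⋃ i, Ω i) ∧ ∀ i, p.2 i ∈ Ω i} :=
    ⟨⟨((hne ⟨0, hn⟩).choose, fun i => (hne i).choose),
      hsub _ (hv0 _), hv0⟩⟩
  have hrw : ∀ p : {p : (EuclideanSpace ℝ (Fin d)) × (Fin n → EuclideanSpace ℝ (Fin d)) //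
      p.1 ∈ convexHull ℝ (⋃ i, Ω i) ∧ ∀ i, p.2 i ∈ Ω i},
      (⨆ y : {y : Fin n → (EuclideanSpace ℝ (Fin d)) × ℝ //
        (∀ i, ‖(y i).1‖ ≤ (y i).2) ∧ (∑ i, (y i).2) = 1},
        ∑ i, (inner ℝ (p.1.1 - p.1.2 i) ((y.1 i).1) : ℝ)) = ⨆ i, ‖p.1.1 - p.1.2 i‖ :=
    fun p => sib_aux_sup hn p.1.1 p.1.2
  simp only [hrw]
  have hbd1 : BddBelow (Set.range fun p : {p : (EuclideanSpace ℝ (Fin d)) × (Fin n → EuclideanSpace ℝ (Fin d)) //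
      p.1 ∈ convexHull ℝ (⋃ i, Ω i) ∧ ∀ i, p.2 i ∈ Ω i} =>
      ⨆ i, ‖p.1.1 - p.1.2 i‖) := by
    refine ⟨0, ?_⟩
    rintro _ ⟨p, rfl⟩
    exact le_ciSup_of_le (Set.Finite.bddAbove (Set.finite_range _)) ⟨0, hn⟩ (norm_nonneg _)
  have hbd2 : BddBelow (Set.range fun x : EuclideanSpace ℝ (Fin d) => ⨆ i, Metric.infDist x (Ω i)) := by
    refine ⟨0, ?_⟩
    rintro _ ⟨x, rfl⟩
    exact le_ciSup_of_le (Set.Finite.bddAbove (Set.finite_range _)) ⟨0, hn⟩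
      Metric.infDist_nonneg
  apply le_antisymm
  · refine le_ciInf fun x => ?_
    have hvx : ∀ i, ∃ y ∈ Ω i, Metric.infDist x (Ω i) = dist x y :=
      fun i => (hcpt i).exists_infDist_eq_dist (hne i) x
    choose v hvΩ hvd using hvx
    obtain ⟨u, huK, hu⟩ := exists_norm_eq_iInf_of_complete_convex
      (hPne.elim fun p => ⟨p.1.1, p.2.1⟩)
      (hKcpt.isClosed.isComplete) hKconv x
    have hproj : ∀ w ∈ K, (inner ℝ (x - u) (w - u) : ℝ) ≤ 0 :=
      (norm_eq_iInf_iff_real_inner_le_zero hKconv huK).mp hu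
    have hcontr : ∀ w ∈ K, ‖u - w‖ ≤ ‖x - w‖ := by
      intro w hw
      have h1 := hproj w hw
      have h2 := norm_add_sq_real (x - u) (u - w)
      have h3 : x - u + (u - w) = x - w := by abel
      rw [h3] at h2
      have h4 : (inner ℝ (x - u) (u - w) : ℝ) = -(inner ℝ (x - u) (w - u) : ℝ) := by
        rw [show u - w = -(w - u) by abel, inner_neg_right]
      nlinarith [norm_nonneg (u - w), norm_nonneg (x - w), norm_nonneg (x - u)]
    refine ciInf_le_of_le hbd1 ⟨(u, v), huK, hvΩ⟩ ?_
    refine ciSup_le fun i => ?_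
    calc ‖u - v i‖ ≤ ‖x - v i‖ := hcontr (v i) (hsub i (hvΩ i))
      _ = dist x (v i) := (dist_eq_norm _ _).symm
      _ = Metric.infDist x (Ω i) := (hvd i).symm
      _ ≤ ⨆ j, Metric.infDist x (Ω j) :=
          le_ciSup (f := fun j => Metric.infDist x (Ω j))
            (Set.Finite.bddAbove (Set.finite_range _)) i
  · refine le_ciInf fun p => ?_
    refine ciInf_le_of_le hbd2 p.1.1 ?_
    refine ciSup_le fun i => ?_
    refine le_ciSup_of_le (Set.Finite.bddAbove (Set.finite_range _)) i ?_
    calc Metric.infDist p.1.1 (Ω i) ≤ dist p.1.1 (p.1.2 i) :=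
          Metric.infDist_le_dist_of_mem (p.2.2 i)
      _ = ‖p.1.1 - p.1.2 i‖ := dist_eq_norm _ _
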